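/- (Consequences of epi-convergence, minimizer part) Let f, f^ν : ℝ^n → ℝ ∪ {±∞} and suppose the epigraphs epi f^ν converge to epi f in the Painlevé–Kuratowski sense (equivalently, f^ν epi-converges to f). Suppose inf f < ∞, ε^ν → 0, ε^ν ≥ 0, and x^ν is an ε^ν-minimizer of f^ν for each ν. If x^ν → x along a subsequence N ⊆ ℕ, then x minimizes f and f^ν(x^ν) → inf f along N. -/

import Mathlib

open Filter Topology

/-- Consequences of epi-convergence (minimizer part): if `fν` epi-converges to `f`,
`inf f < ∞`, `εν → 0` with `εν ≥ 0`, each `xν` is an `εν`-minimizer of `fν`, and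
`xν → x` along a subsequence `N`, then `x` minimizes `f` and `fν(xν) → inf f`
along `N`. -/
theorem stmt13 {n : ℕ} (f : (Fin n → ℝ) → EReal) (fν : ℕ → (Fin n → ℝ) → EReal)
    (hliminf : ∀ (xs : ℕ → (Fin n → ℝ)) (x : Fin n → ℝ),
      Tendsto xs atTop (𝓝 x) → f x ≤ liminf (fun ν => fν ν (xs ν)) atTop)
    (hlimsup : ∀ x : Fin n → ℝ, ∃ xs : ℕ → (Fin n → ℝ),
      Tendsto xs atTop (𝓝 x) ∧ limsup (fun ν => fν ν (xs ν)) atTop ≤ f x)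
    (hinf : (⨅ x, f x) < ⊤)
    (ε : ℕ → ℝ) (hεnn : ∀ ν, 0 ≤ ε ν) (hε : Tendsto ε atTop (𝓝 0))
    (xs : ℕ → (Fin n → ℝ))
    (hmin : ∀ ν, fν ν (xs ν) < ⊤ ∧ fν ν (xs ν) ≤ (⨅ x, fν ν x) + ((ε ν : ℝ) : EReal))
    (N : ℕ → ℕ) (hN : StrictMono N) (x : Fin n → ℝ)
    (hconv : Tendsto (fun k => xs (N k)) atTop (𝓝 x)) :
    (∀ x' : Fin n → ℝ, f x ≤ f x') ∧
    Tendsto (fun k => fν (N k) (xs (N k))) atTop (𝓝 (⨅ x', f x')) := by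
  classical
  set p : EReal := ⨅ x', f x' with hp
  have hNtend : Tendsto N atTop atTop := hN.tendsto_atTop
  have hmap : map N atTop ≤ atTop := hNtend
  -- Step 1: liminf lower bound along the subsequence
  set ys : ℕ → (Fin n → ℝ) := fun ν => if ν ∈ Set.range N then xs ν else x with hys
  have hysx : Tendsto ys atTop (𝓝 x) := by
    rw [tendsto_iff_forall_eventually_mem]
    intro U hU
    rcases (tendsto_iff_forall_eventually_mem.1 hconv U hU).exists_forall_of_atTop
      with ⟨k₀, hk₀⟩
    refine eventually_atTop.2 ⟨N k₀, fun ν hν => ?_⟩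
    by_cases hmem : ν ∈ Set.range N
    · rcases hmem with ⟨k, rfl⟩
      have hk : k₀ ≤ k := (hN.le_iff_le).1 hν
      simpa [ys, Set.mem_range] using hk₀ k hk
    · simp only [ys]
      rw [if_neg hmem]
      exact mem_of_mem_nhds hU
  have h1 : f x ≤ liminf (fun k => fν (N k) (xs (N k))) atTop := by
    have hfull : f x ≤ liminf (fun ν => fν ν (ys ν)) atTop := hliminf ys x hysx
    have hsub : liminf (fun ν => fν ν (ys ν)) atTop
        ≤ liminf (fun k => fν (N k) (ys (N k))) atTop := by
      rw [show (fun k => fν (N k) (ys (N k))) = (fun ν => fν ν (ys ν)) ∘ N from rfl,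
        liminf_comp]
      exact liminf_le_liminf_of_le hmap
    have heq : (fun k => fν (N k) (ys (N k))) = fun k => fν (N k) (xs (N k)) := by
      funext k; simp [ys, Set.mem_range_self]
    exact hfull.trans (heq ▸ hsub)
  -- Step 2: limsup of infima is at most p
  have hinfle : limsup (fun ν => ⨅ x', fν ν x') atTop ≤ p := by
    rw [hp]
    refine le_iInf fun z => ?_
    rcases hlimsup z with ⟨zs, hzs, hzs2⟩
    refine le_trans ?_ hzs2
    exact limsup_le_limsup (Eventually.of_forall fun ν => iInf_le _ _)
  have hinfleN : limsup (fun k => ⨅ x', fν (N k) x') atTop ≤ p := by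
    refine le_trans ?_ hinfle
    rw [show (fun k => ⨅ x', fν (N k) x') = (fun ν => ⨅ x', fν ν x') ∘ N from rfl,
      limsup_comp]
    exact limsup_le_limsup_of_le hmap
  -- limsup of εν along N is 0
  have hεN : Tendsto (fun k => ((ε (N k) : ℝ) : EReal)) atTop (𝓝 (0 : EReal)) := by
    have : Tendsto (fun k => ε (N k)) atTop (𝓝 0) := hε.comp hNtend
    have := (continuous_coe_real_ereal.tendsto 0).comp this
    simpa [Function.comp_def] using this
  have hεlimsup : limsup (fun k => ((ε (N k) : ℝ) : EReal)) atTop = 0 := hεN.limsup_eq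
  -- Step 3: limsup upper bound along the subsequence
  have h2 : limsup (fun k => fν (N k) (xs (N k))) atTop ≤ p := by
    have hle : limsup (fun k => fν (N k) (xs (N k))) atTop
        ≤ limsup ((fun k => ⨅ x', fν (N k) x') + fun k => ((ε (N k) : ℝ) : EReal)) atTop :=
      limsup_le_limsup (Eventually.of_forall fun k => (hmin (N k)).2)
    have hadd := EReal.limsup_add_le (f := atTop)
      (u := fun k => ⨅ x', fν (N k) x') (v := fun k => ((ε (N k) : ℝ) : EReal))
      (Or.inr (by rw [hεlimsup]; exact (by norm_num)))
      (Or.inr (by rw [hεlimsup]; exact (by norm_num)))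
    refine hle.trans (hadd.trans ?_)
    rw [hεlimsup, add_zero]
    exact hinfleN
  -- Conclusion
  have hpx : p ≤ f x := iInf_le _ _
  have hll : liminf (fun k => fν (N k) (xs (N k))) atTop
      ≤ limsup (fun k => fν (N k) (xs (N k))) atTop := liminf_le_limsup
  have hfx : f x = p := le_antisymm (by calc f x ≤ _ := h1
                                             _ ≤ _ := hll
                                             _ ≤ p := h2) hpx
  refine ⟨fun x' => hfx ▸ iInf_le _ _, ?_⟩
  have hliminf' : liminf (fun k => fν (N k) (xs (N k))) atTop = p :=
    le_antisymm (hll.trans h2) (hfx ▸ h1)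
  have hlimsup' : limsup (fun k => fν (N k) (xs (N k))) atTop = p :=
    le_antisymm h2 (hliminf' ▸ hll)
  exact tendsto_of_liminf_eq_limsup hliminf' hlimsup'
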